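/- (The keyframe Jacobian automatically satisfies the observability constraint for the observability-constrained null space.) Fix g, p_F ∈ ℝ³ and a first-estimate matrix R̂_{G0} ∈ ℝ^{3×3}. For every J* ∈ ℝ^{2×3} and every R_KF ∈ ℝ^{3×3}, the keyframe map-feature Jacobian evaluated with the fixed map-feature value p̂_F = p_F, namely H^{KF} = −J* R_KFᵀ [0₃ 0₃ 0₃ 0₃ 0₃ 0₃ 0₃ 0₃ −(p_F)_× I₃ −I₃], satisfies H^{KF} N*₃ = 0. -/

import Mathlib

open Matrix

abbrev V3 := Fin 3 → ℝ
abbrev M3 := Matrix (Fin 3) (Fin 3) ℝ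

/-- The cross-product (skew-symmetric) matrix `(a)_×`. -/
def skew (a : V3) : M3 :=
  !![0, -a 2, a 1; a 2, 0, -a 0; -a 1, a 0, 0]

/-- Row/column index of the 33-dimensional right-invariant error
`(ξ_θ, ξ_v, ξ_p, ξ_pf, ξ_pG, ξ_θG, ξ_bg, ξ_ba, ξ_θKF, ξ_pKF, ξ_F)`: 11 blocks of 3. -/
abbrev Idx33 := Fin 11 × Fin 3

/-- Column index for the 33×10 unobservable-direction matrix:
one single column followed by three 3-column blocks. -/
abbrev Cols10 := Fin 1 ⊕ Fin 3 × Fin 3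

/-- 33×33 matrix from an 11×11 table of 3×3 blocks. -/
def bm11 (f : Fin 11 → Fin 11 → M3) : Matrix Idx33 Idx33 ℝ :=
  Matrix.of fun p q => f p.1 q.1 p.2 q.2

/-- The 33×33 propagation matrix `A*` of the imperfect augmented system:
the upper-left 24×24 block is the perfect-system propagation matrix,
all other entries are zero. -/
def AStar (g : V3) (RI : M3) (v pI pf pG : V3) : Matrix Idx33 Idx33 ℝ :=
  bm11 ![![0, 0, 0, 0, 0, 0, -RI, 0, 0, 0, 0],
         ![skew g, 0, 0, 0, 0, 0, -(skew v * RI), -RI, 0, 0, 0],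
         ![0, 1, 0, 0, 0, 0, -(skew pI * RI), 0, 0, 0, 0],
         ![0, 0, 0, 0, 0, 0, -(skew pf * RI), 0, 0, 0, 0],
         ![0, 0, 0, 0, 0, 0, -(skew pG * RI), 0, 0, 0, 0],
         ![0, 0, 0, 0, 0, 0, 0, 0, 0, 0, 0],
         ![0, 0, 0, 0, 0, 0, 0, 0, 0, 0, 0],
         ![0, 0, 0, 0, 0, 0, 0, 0, 0, 0, 0],
         ![0, 0, 0, 0, 0, 0, 0, 0, 0, 0, 0],
         ![0, 0, 0, 0, 0, 0, 0, 0, 0, 0, 0],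
         ![0, 0, 0, 0, 0, 0, 0, 0, 0, 0, 0]]

/-- The 33×10 unobservable-direction matrix `N*₁` (parametric in `R_G`; `N*₃` is the
same matrix evaluated at the first-estimate `R̂_{G0}`). -/
def NStar1 (g pF : V3) (RG : M3) : Matrix Idx33 Cols10 ℝ :=
  Matrix.of fun p j =>
    Sum.elim
      (fun _ => (![g, 0, 0, 0, 0, g, 0, 0, 0, 0, 0] : Fin 11 → V3) p.1 p.2)
      (fun q =>
        (![![0, 0, 0], ![0, 0, 0], ![1, 0, 0], ![1, 0, 0], ![1, -RG, 0],
           ![0, 0, 1], ![0, 0, 0], ![0, 0, 0], ![0, 0, -RGᵀ], ![0, 1, 0],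
           ![0, 1, skew pF * RGᵀ]] : Fin 11 → Fin 3 → M3) p.1 q.1 p.2 q.2) j

/-- A 2×33 measurement Jacobian `B ⬝ [f₀ ⋯ f₁₀]` from a 2×3 factor `B`
and an 11-tuple of 3×3 blocks. -/
def rowJac (B : Matrix (Fin 2) (Fin 3) ℝ) (f : Fin 11 → M3) : Matrix (Fin 2) Idx33 ℝ :=
  Matrix.of fun r p => (B * f p.1) r p.2

/-- The keyframe map-feature Jacobian automatically satisfies the observability
constraint for the observability-constrained null space `N*₃ = N*₁(R̂_{G0})`. -/
theorem HKF_annihilates_NStar3 (g pF : V3) (RG0 : M3)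
    (Jstar : Matrix (Fin 2) (Fin 3) ℝ) (RKF : M3) :
    rowJac (-(Jstar * RKFᵀ))
        ![0, 0, 0, 0, 0, 0, 0, 0, -skew pF, 1, -1] * NStar1 g pF RG0 = 0 := by
  set B := -(Jstar * RKFᵀ) with hB
  ext r j
  simp only [rowJac, NStar1, Matrix.mul_apply, Matrix.of_apply, Fintype.sum_prod_type]
  rcases j with j | ⟨q, c⟩
  · simp [Fin.sum_univ_succ, Matrix.cons_val_zero, Matrix.cons_val_one, Matrix.head_cons,
      Matrix.cons_val_succ]
  · fin_cases q <;>
    simp [Fin.sum_univ_succ, Matrix.cons_val_zero, Matrix.cons_val_one, Matrix.head_cons,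
      Matrix.cons_val_succ, Matrix.one_apply, Matrix.mul_apply, Finset.mul_sum,
      Finset.sum_add_distrib]
    · split_ifs <;> ring
    · ring
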